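/- For every e : ℕ → ℕ → ℕ such that E 0 e and E 1 e are disjoint, there exists B : List Bool → Bool such that: (a) for every m there exists a list s : List Bool of length m with B (s.take k) = false for all k ≤ m; and (b) every γ : ℕ → Bool satisfying B (γ↾n) = false for all n separates the two sets: for every n, if γ n = false then n ∉ E 0 e, and if γ n = true then n ∉ E 1 e. (The separating-tree construction from the proof of Theorem 3.1, WKL ⟹ Σ⁰₁-Separation.) -/

import Mathlib

/-- The first `n` values of `γ` as a list. -/
def seg (γ : ℕ → Bool) (n : ℕ) : List Bool := List.ofFn fun i : Fin n => γ i

/-- The `n`-th set enumerated by `e`. -/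
def E (n : ℕ) (e : ℕ → ℕ → ℕ) : Set ℕ := {k | ∃ p, e n p = k + 1}

/-- The separating-tree construction from the proof of Theorem 3.1
(WKL ⟹ Σ⁰₁-Separation). -/
theorem separating_tree (e : ℕ → ℕ → ℕ)
    (hdisj : ∀ k : ℕ, ¬ (k ∈ E 0 e ∧ k ∈ E 1 e)) :
    ∃ B : List Bool → Bool,
      (∀ m : ℕ, ∃ s : List Bool, s.length = m ∧ ∀ k ≤ m, B (s.take k) = false) ∧
      (∀ γ : ℕ → Bool, (∀ n, B (seg γ n) = false) →
        ∀ n : ℕ, (γ n = false → n ∉ E 0 e) ∧ (γ n = true → n ∉ E 1 e)) := by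
  refine ⟨fun s => decide (∃ k : Fin s.length, ∃ p : Fin s.length,
      (s[(k : ℕ)] = false ∧ e 0 p = (k : ℕ) + 1) ∨ (s[(k : ℕ)] = true ∧ e 1 p = (k : ℕ) + 1)), ?_, ?_⟩
  · intro m
    refine ⟨List.ofFn (fun i : Fin m => decide (∃ p < m, e 0 p = (i : ℕ) + 1)), by simp, ?_⟩
    intro k hk
    simp only [decide_eq_false_iff_not]
    rintro ⟨j, p, h⟩
    have hj' : (j : ℕ) < m := by have := j.isLt; simp at this; omega
    have hp' : (p : ℕ) < m := by have := p.isLt; simp at this; omega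
    simp only [List.getElem_take, List.getElem_ofFn] at h
    rcases h with ⟨h1, h2⟩ | ⟨h1, h2⟩
    · rw [decide_eq_false_iff_not] at h1
      exact h1 ⟨p, hp', h2⟩
    · rw [decide_eq_true_eq] at h1
      obtain ⟨q, hq, hq2⟩ := h1
      exact hdisj j ⟨⟨q, hq2⟩, ⟨p, h2⟩⟩
  · intro γ hγ n
    constructor
    · rintro hn ⟨p, hp⟩
      have := hγ (max (n + 1) (p + 1))
      rw [decide_eq_false_iff_not] at this
      apply this
      have hn' : n < (seg γ (max (n + 1) (p + 1))).length := by
        simp only [seg, List.length_ofFn]; omega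
      refine ⟨⟨n, hn'⟩, ⟨p, by simp only [seg, List.length_ofFn]; omega⟩, Or.inl ⟨?_, hp⟩⟩
      simp [seg, hn, -List.ofFn_succ]
    · rintro hn ⟨p, hp⟩
      have := hγ (max (n + 1) (p + 1))
      rw [decide_eq_false_iff_not] at this
      apply this
      have hn' : n < (seg γ (max (n + 1) (p + 1))).length := by
        simp only [seg, List.length_ofFn]; omega
      refine ⟨⟨n, hn'⟩, ⟨p, by simp only [seg, List.length_ofFn]; omega⟩, Or.inr ⟨?_, hp⟩⟩
      simp [seg, hn, -List.ofFn_succ]
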